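/- Let B be a nonempty set, f, g₁, g₂ : B → ω with g₁(b) ≤ g₂(b) for all b ∈ B. For i = 1, 2 define the partial function 𝒰ᵢ(m) = max{f(b) : b ∈ B, gᵢ(b) ≤ m}, defined exactly when the set {f(b) : gᵢ(b) ≤ m} is nonempty and bounded above. Then typ(𝒰₂) ⪯ typ(𝒰₁) with respect to the linear order α ≺ β ≺ γ ≺ δ ≺ ε. -/
import Mathlib


def domPlus (D : Set ℕ) (g : ℕ → ℕ) : Set ℕ := {n ∈ D | n ≤ g n}

def domMinus (D : Set ℕ) (g : ℕ → ℕ) : Set ℕ := {n ∈ D | g n ≤ n}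

def bddOn (D : Set ℕ) (g : ℕ → ℕ) : Prop := ∃ C, ∀ n ∈ D, g n ≤ C

inductive Typ where
  | A | B | C | D | E
deriving DecidableEq

def typIs (D : Set ℕ) (g : ℕ → ℕ) : Typ → Prop
  | .A => D.Infinite ∧ bddOn D g
  | .B => D.Infinite ∧ (domPlus D g).Finite ∧ ¬ bddOn D g
  | .C => (domPlus D g).Infinite ∧ (domMinus D g).Infinite
  | .D => D.Infinite ∧ (domMinus D g).Finite
  | .E => D.Finite

/-- Position in the linear order α ≺ β ≺ γ ≺ δ ≺ ε. -/
def Typ.ord : Typ → ℕ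
  | .A => 0
  | .B => 1
  | .C => 2
  | .D => 3
  | .E => 4

/-- If `g₁ ≤ g₂` pointwise, then for `𝒰ᵢ(m) = max {f b : gᵢ b ≤ m}` we have
`typ(𝒰₂) ⪯ typ(𝒰₁)`. -/
theorem stmt10 {B : Type*} [Nonempty B] (f g₁ g₂ : B → ℕ)
    (hle : ∀ b, g₁ b ≤ g₂ b)
    (dom₁ : Set ℕ) (val₁ : ℕ → ℕ) (dom₂ : Set ℕ) (val₂ : ℕ → ℕ)
    (hdom₁ : dom₁ = {m | (∃ b, g₁ b ≤ m) ∧ BddAbove {k | ∃ b, g₁ b ≤ m ∧ f b = k}})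
    (hval₁ : ∀ m ∈ dom₁, val₁ m = sSup {k | ∃ b, g₁ b ≤ m ∧ f b = k})
    (hdom₂ : dom₂ = {m | (∃ b, g₂ b ≤ m) ∧ BddAbove {k | ∃ b, g₂ b ≤ m ∧ f b = k}})
    (hval₂ : ∀ m ∈ dom₂, val₂ m = sSup {k | ∃ b, g₂ b ≤ m ∧ f b = k})
    (t₁ t₂ : Typ) (ht₁ : typIs dom₁ val₁ t₁) (ht₂ : typIs dom₂ val₂ t₂) :
    t₂.ord ≤ t₁.ord := by
  obtain ⟨b₀⟩ := ‹Nonempty B›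
  have hsub : ∀ m, {k | ∃ b, g₂ b ≤ m ∧ f b = k} ⊆ {k | ∃ b, g₁ b ≤ m ∧ f b = k} := by
    rintro m k ⟨b, hb, rfl⟩; exact ⟨b, (hle b).trans hb, rfl⟩
  have hmono : ∀ {m m' : ℕ}, m ≤ m' →
      {k | ∃ b, g₁ b ≤ m ∧ f b = k} ⊆ {k | ∃ b, g₁ b ≤ m' ∧ f b = k} := by
    rintro m m' h k ⟨b, hb, rfl⟩; exact ⟨b, hb.trans h, rfl⟩
  have hbdd : dom₁.Infinite → ∀ m, BddAbove {k | ∃ b, g₁ b ≤ m ∧ f b = k} := by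
    intro H m
    obtain ⟨m', hm', hlt⟩ := H.exists_gt m
    rw [hdom₁] at hm'
    exact (hm'.2).mono (hmono hlt.le)
  have hd2sub : dom₁.Infinite → dom₂ ⊆ dom₁ := by
    intro H m hm
    rw [hdom₂] at hm
    obtain ⟨b, hb⟩ := hm.1
    rw [hdom₁]
    exact ⟨⟨b, (hle b).trans hb⟩, hbdd H m⟩
  have hIci : dom₁.Infinite → Set.Ici (g₂ b₀) ⊆ dom₂ := by
    intro H m hm
    rw [hdom₂]
    exact ⟨⟨b₀, hm⟩, ((hbdd H m).mono (hsub m))⟩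
  have hd2inf : dom₁.Infinite → dom₂.Infinite := fun H =>
    (Set.Ici_infinite (g₂ b₀)).mono (hIci H)
  have hvalle : dom₁.Infinite → ∀ m ∈ dom₂, val₂ m ≤ val₁ m := by
    intro H m hm
    have hm1 := hd2sub H hm
    have hne : {k | ∃ b, g₂ b ≤ m ∧ f b = k}.Nonempty := by
      rw [hdom₂] at hm
      obtain ⟨b, hb⟩ := hm.1
      exact ⟨f b, b, hb, rfl⟩
    rw [hval₂ m hm, hval₁ m hm1]
    exact csSup_le_csSup (hbdd H m) hne (hsub m)
  have K2 : dom₁.Infinite → domPlus dom₂ val₂ ⊆ domPlus dom₁ val₁ := by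
    rintro H m ⟨hm, hp⟩
    exact ⟨hd2sub H hm, hp.trans (hvalle H m hm)⟩
  have K3 : dom₁.Infinite → domMinus dom₂ val₂ ⊆ Set.Iio (g₂ b₀) →
      False → True := fun _ _ _ => trivial
  have K3' : dom₁.Infinite → domMinus dom₁ val₁ ⊆
      Set.Iio (g₂ b₀) ∪ domMinus dom₂ val₂ := by
    rintro H m ⟨hm, hp⟩
    rcases lt_or_ge m (g₂ b₀) with h | h
    · exact Or.inl h
    · have hm2 : m ∈ dom₂ := hIci H h
      exact Or.inr ⟨hm2, (hvalle H m hm2).trans hp⟩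
  have K5 : ∀ C, (∀ n ∈ dom₁, val₁ n ≤ C) → (domPlus dom₁ val₁).Finite := by
    intro C hC
    apply (Set.finite_Iic C).subset
    rintro m ⟨hm, hp⟩
    exact hp.trans (hC m hm)
  -- infinite dom₂ with finite domMinus gives infinite domPlus
  have KD : ∀ (D : Set ℕ) (v : ℕ → ℕ), D.Infinite → (domMinus D v).Finite →
      (domPlus D v).Infinite := by
    intro D v hD hfin
    apply (hD.diff hfin).mono
    rintro m ⟨hm, hnm⟩
    refine ⟨hm, ?_⟩
    by_contra hlt
    exact hnm ⟨hm, le_of_not_ge hlt⟩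
  have domC : ∀ (D : Set ℕ) (v : ℕ → ℕ), (domPlus D v).Infinite → D.Infinite :=
    fun D v h => h.mono (fun m hm => hm.1)
  cases t₁ <;> cases t₂ <;> simp only [typIs] at ht₁ ht₂ <;>
    first
      | decide
      | exact absurd (hd2inf ht₁.1) (Set.not_infinite.mpr ht₂)
      | skip
  -- remaining forbidden cases
  case A.B =>
    exfalso
    obtain ⟨C, hC⟩ := ht₁.2
    exact ht₂.2.2 ⟨C, fun m hm => (hvalle ht₁.1 m hm).trans (hC m (hd2sub ht₁.1 hm))⟩
  case A.C =>
    exfalso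
    obtain ⟨C, hC⟩ := ht₁.2
    exact (ht₂.1.mono (K2 ht₁.1)) (K5 C hC)
  case A.D =>
    exfalso
    obtain ⟨C, hC⟩ := ht₁.2
    exact ((KD dom₂ val₂ ht₂.1 ht₂.2).mono (K2 ht₁.1)) (K5 C hC)
  case B.C =>
    exact absurd (ht₂.1.mono (K2 ht₁.1)) (Set.not_infinite.mpr ht₁.2.1)
  case B.D =>
    exact absurd ((KD dom₂ val₂ ht₂.1 ht₂.2).mono (K2 ht₁.1))
      (Set.not_infinite.mpr ht₁.2.1)
  case C.D =>
    exfalso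
    have H : dom₁.Infinite := domC dom₁ val₁ ht₁.1
    exact (ht₁.2.mono (K3' H)) ((Set.finite_Iio _).union ht₂.2)
  case C.E =>
    exact absurd (hd2inf (domC dom₁ val₁ ht₁.1)) (Set.not_infinite.mpr ht₂)
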